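/- arXiv:1611.06011 — 2 statements merged into one kernel-verified Lean document; each statement's English description precedes it below -/
import Mathlib

section
/- GLMB conjugacy under the hybrid likelihood (finite/discrete version): let the predicted density be π̄(X) = Δ(X) ∑_{ξ,I} ω̄^{(ξ,I)} δ_I[L(X)] [p̄^{(ξ)}]^X on finite subsets X of a finite space 𝕏 × 𝕃 with distinct labels, and let g(y|X) ∝ ∑_{θ∈Θ(L(X))} ∏_{(x,ℓ)∈X} φ^{(θ(ℓ))}_y(x,ℓ). Then the product π̄(X)·g(y|X) is proportional to Δ(X) ∑_{ξ,I,θ} ω̄^{(ξ,I)} 1_{Θ(I)}(θ) [φ̄^{(ξ,θ)}]^I δ_I[L(X)] [p^{(ξ,θ)}]^X, where φ̄^{(ξ,θ)}(ℓ) = ∑_{x∈𝕏} p̄^{(ξ)}(x,ℓ) φ^{(θ(ℓ))}_y(x,ℓ) and p^{(ξ,θ)}(x,ℓ) = p̄^{(ξ)}(x,ℓ) φ^{(θ(ℓ))}_y(x,ℓ) / φ̄^{(ξ,θ)}(ℓ), provided φ̄^{(ξ,θ)}(ℓ) > 0 for all relevant ℓ. -/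
open scoped Classical

/-- GLMB conjugacy under the hybrid likelihood (finite/discrete version):
for any labeled multi-object state `X` with distinct labels, the product of the
predicted GLMB density and the hybrid likelihood equals the GLMB-form expression
with updated weights `ω̄^{(ξ,I)} 1_{Θ(I)}(θ) [φ̄^{(ξ,θ)}]^I` and updated
single-object densities `p^{(ξ,θ)} = p̄^{(ξ)} φ^{(θ(ℓ))}_y / φ̄^{(ξ,θ)}(ℓ)`. -/
theorem GLMB_conjugacy_hybrid {𝕏 𝕃 Ξ : Type*} [Fintype 𝕏] [Fintype 𝕃] [Fintype Ξ]
    [DecidableEq 𝕃] (M : ℕ)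
    (ωbar : Ξ → Finset 𝕃 → ℝ)
    (pbar : Ξ → 𝕏 → 𝕃 → ℝ)
    (hpbar_nonneg : ∀ ξ x ℓ, 0 ≤ pbar ξ x ℓ)
    (hpbar_sum : ∀ ξ ℓ, ∑ x : 𝕏, pbar ξ x ℓ = 1)
    (φ : ℕ → 𝕏 → 𝕃 → ℝ)
    (hφ : ∀ j x ℓ, 0 ≤ φ j x ℓ)
    -- normalizers
    (φbar : Ξ → (𝕃 → Fin (M + 1)) → 𝕃 → ℝ)
    (hφbar : ∀ ξ θ ℓ, φbar ξ θ ℓ = ∑ x : 𝕏, pbar ξ x ℓ * φ (θ ℓ : ℕ) x ℓ)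
    (hφbar_pos : ∀ ξ θ ℓ, 0 < φbar ξ θ ℓ)
    -- updated densities
    (pupd : Ξ → (𝕃 → Fin (M + 1)) → 𝕏 → 𝕃 → ℝ)
    (hpupd : ∀ ξ θ x ℓ, pupd ξ θ x ℓ = pbar ξ x ℓ * φ (θ ℓ : ℕ) x ℓ / φbar ξ θ ℓ)
    (X : Finset (𝕏 × 𝕃)) (hX : Set.InjOn Prod.snd (X : Set (𝕏 × 𝕃))) :
    (∑ ξ : Ξ, ∑ I : Finset 𝕃,
        ωbar ξ I * (if X.image Prod.snd = I then (1 : ℝ) else 0) *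
          ∏ p ∈ X, pbar ξ p.1 p.2) *
      (∑ θ ∈ Finset.univ.filter
          (fun θ : 𝕃 → Fin (M + 1) =>
            Set.InjOn θ {ℓ | ℓ ∈ X.image Prod.snd ∧ 0 < (θ ℓ : ℕ)}),
          ∏ p ∈ X, φ (θ p.2 : ℕ) p.1 p.2) =
    ∑ ξ : Ξ, ∑ I : Finset 𝕃, ∑ θ : 𝕃 → Fin (M + 1),
        ωbar ξ I *
          (if Set.InjOn θ {ℓ | ℓ ∈ (I : Set 𝕃) ∧ 0 < (θ ℓ : ℕ)} then (1 : ℝ) else 0) *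
          (∏ ℓ ∈ I, φbar ξ θ ℓ) *
          (if X.image Prod.snd = I then (1 : ℝ) else 0) *
          ∏ p ∈ X, pupd ξ θ p.1 p.2 := by
  classical
  rw [Finset.sum_mul]
  refine Finset.sum_congr rfl fun ξ _ => ?_
  rw [Finset.sum_mul]
  refine Finset.sum_congr rfl fun I _ => ?_
  by_cases hI : X.image Prod.snd = I
  · subst hI
    simp only [if_pos rfl, mul_one]
    rw [Finset.mul_sum, Finset.sum_filter]
    refine Finset.sum_congr rfl fun θ _ => ?_
    have hset : {ℓ | ℓ ∈ (↑(X.image Prod.snd) : Set 𝕃) ∧ 0 < (θ ℓ : ℕ)}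
        = {ℓ | ℓ ∈ X.image Prod.snd ∧ 0 < (θ ℓ : ℕ)} := by
      ext ℓ; simp [Finset.mem_coe]
    rw [hset]
    by_cases hθ : Set.InjOn θ {ℓ | ℓ ∈ X.image Prod.snd ∧ 0 < (θ ℓ : ℕ)}
    · rw [if_pos hθ, if_pos hθ, mul_one]
      have hinj : ∀ x ∈ X, ∀ y ∈ X, Prod.snd x = Prod.snd y → x = y := fun x hx y hy h =>
        hX (Finset.mem_coe.mpr hx) (Finset.mem_coe.mpr hy) h
      have hprod : (∏ ℓ ∈ X.image Prod.snd, φbar ξ θ ℓ) = ∏ p ∈ X, φbar ξ θ p.2 :=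
        Finset.prod_image hinj
      rw [hprod]
      simp only [if_true, mul_one, one_mul]
      rw [mul_assoc, ← Finset.prod_mul_distrib]
      have hpt : (∏ x ∈ X, pbar ξ x.1 x.2 * φ ((θ x.2 : Fin (M+1)) : ℕ) x.1 x.2)
          = ∏ p ∈ X, φbar ξ θ p.2 * pupd ξ θ p.1 p.2 :=
        Finset.prod_congr rfl fun p _ => by
          rw [hpupd]; field_simp [(hφbar_pos ξ θ p.2).ne']
      rw [hpt, Finset.prod_mul_distrib, mul_assoc]
    · rw [if_neg hθ, if_neg hθ]
      ring
  · simp [if_neg hI]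
end

section
/- If a GLMB density π on finite labeled subsets of a finite space 𝕏 × 𝕃 is normalized (weights sum to 1 and each p^{(ξ)}(·,ℓ) is a probability distribution), then its set integral equals 1: ∑_{n=0}^{|𝕏×𝕃|} (1/n!) ∑_{(x_1,...,x_n) distinct} π({x_1,...,x_n}) = 1. -/
open scoped Classical

/-- Key lemma: summing the product `∏ f` over all labeled sets `X` with
distinct labels and label set exactly `I` factorizes as a product over `I`. -/
lemma GLMB_key {𝕏 𝕃 : Type*} [Fintype 𝕏] [Fintype 𝕃] [DecidableEq 𝕏] [DecidableEq 𝕃]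
    (f : 𝕏 × 𝕃 → ℝ) (I : Finset 𝕃) :
    ∑ X : Finset (𝕏 × 𝕃),
      (if Set.InjOn Prod.snd (X : Set (𝕏 × 𝕃)) ∧ X.image Prod.snd = I
        then ∏ q ∈ X, f q else 0) = ∏ ℓ ∈ I, ∑ x : 𝕏, f (x, ℓ) := by
  classical
  induction I using Finset.induction with
  | empty =>
      rw [Finset.prod_empty]
      rw [Finset.sum_eq_single (∅ : Finset (𝕏 × 𝕃))]
      · simp
      · intro X _ hX
        rw [if_neg]
        rintro ⟨-, himg⟩
        exact hX (Finset.image_eq_empty.mp himg)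
      · simp
  | @insert a I ha ih =>
      rw [Finset.prod_insert ha, ← ih]
      -- rewrite both sides as sums over filters
      have hLHS : ∑ X : Finset (𝕏 × 𝕃),
          (if Set.InjOn Prod.snd (X : Set (𝕏 × 𝕃)) ∧ X.image Prod.snd = insert a I
            then ∏ q ∈ X, f q else 0)
          = ∑ X ∈ Finset.univ.filter (fun X : Finset (𝕏 × 𝕃) =>
              Set.InjOn Prod.snd (X : Set (𝕏 × 𝕃)) ∧ X.image Prod.snd = insert a I),
              ∏ q ∈ X, f q := by
        rw [Finset.sum_filter]
      have hRHS : ∑ X : Finset (𝕏 × 𝕃),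
          (if Set.InjOn Prod.snd (X : Set (𝕏 × 𝕃)) ∧ X.image Prod.snd = I
            then ∏ q ∈ X, f q else 0)
          = ∑ X ∈ Finset.univ.filter (fun X : Finset (𝕏 × 𝕃) =>
              Set.InjOn Prod.snd (X : Set (𝕏 × 𝕃)) ∧ X.image Prod.snd = I),
              ∏ q ∈ X, f q := by
        rw [Finset.sum_filter]
      rw [hLHS, hRHS]
      set s := Finset.univ.filter (fun X : Finset (𝕏 × 𝕃) =>
        Set.InjOn Prod.snd (X : Set (𝕏 × 𝕃)) ∧ X.image Prod.snd = I) with hs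
      set t := Finset.univ.filter (fun X : Finset (𝕏 × 𝕃) =>
        Set.InjOn Prod.snd (X : Set (𝕏 × 𝕃)) ∧ X.image Prod.snd = insert a I) with ht
      have hmem_s : ∀ X' : Finset (𝕏 × 𝕃), X' ∈ s ↔
          Set.InjOn Prod.snd (X' : Set (𝕏 × 𝕃)) ∧ X'.image Prod.snd = I := by
        intro X'; simp [hs]
      have hmem_t : ∀ X : Finset (𝕏 × 𝕃), X ∈ t ↔
          Set.InjOn Prod.snd (X : Set (𝕏 × 𝕃)) ∧ X.image Prod.snd = insert a I := by
        intro X; simp [ht]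
      -- key fact: for X' ∈ s, no element of X' has label a
      have hnotmem : ∀ (x : 𝕏) (X' : Finset (𝕏 × 𝕃)), X' ∈ s → (x, a) ∉ X' := by
        intro x X' hX' hxa
        obtain ⟨-, himg⟩ := (hmem_s X').mp hX'
        exact ha (himg ▸ Finset.mem_image_of_mem Prod.snd hxa)
      rw [Finset.sum_mul_sum, ← Finset.sum_product']
      refine (Finset.sum_bij (fun (pr : 𝕏 × Finset (𝕏 × 𝕃)) _ => insert (pr.1, a) pr.2)
        ?_ ?_ ?_ ?_).symm
      · -- maps into t
        rintro ⟨x, X'⟩ hp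
        rw [Finset.mem_product] at hp
        obtain ⟨hinj, himg⟩ := (hmem_s X').mp hp.2
        rw [hmem_t]
        constructor
        · intro q1 hq1 q2 hq2 heq
          rw [Finset.coe_insert, Set.mem_insert_iff] at hq1 hq2
          rcases hq1 with h1 | h1 <;> rcases hq2 with h2 | h2
          · rw [h1, h2]
          · exfalso; apply ha
            rw [← himg]
            have : q2.2 = a := by rw [← heq, h1]
            exact this ▸ Finset.mem_image_of_mem Prod.snd h2
          · exfalso; apply ha
            rw [← himg]
            have : q1.2 = a := by rw [heq, h2]
            exact this ▸ Finset.mem_image_of_mem Prod.snd h1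
          · exact hinj h1 h2 heq
        · rw [Finset.image_insert, himg]
      · -- injective
        rintro ⟨x, X'⟩ hp ⟨y, Y'⟩ hq heq
        rw [Finset.mem_product] at hp hq
        simp only at heq
        have hxX : (x, a) ∉ X' := hnotmem x X' hp.2
        have hyY : (y, a) ∉ Y' := hnotmem y Y' hq.2
        have hxy : x = y := by
          have : (x, a) ∈ insert (y, a) Y' := heq ▸ Finset.mem_insert_self _ _
          rcases Finset.mem_insert.mp this with h | h
          · exact (Prod.mk.injEq _ _ _ _ ▸ h).1
          · exact absurd h (hnotmem x Y' hq.2)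
        have hXY : X' = Y' := by
          have h1 : X' = (insert (x, a) X').erase (x, a) :=
            (Finset.erase_insert hxX).symm
          have h2 : Y' = (insert (y, a) Y').erase (y, a) :=
            (Finset.erase_insert hyY).symm
          rw [h1, h2, heq, hxy]
        simp [hxy, hXY]
      · -- surjective
        intro X hX
        obtain ⟨hinj, himg⟩ := (hmem_t X).mp hX
        have haimg : a ∈ X.image Prod.snd := himg ▸ Finset.mem_insert_self a I
        obtain ⟨q, hqX, hqa⟩ := Finset.mem_image.mp haimg
        have hq' : q = (q.1, a) := by rw [← hqa]
        refine ⟨⟨q.1, X.erase q⟩, ?_, ?_⟩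
        · rw [Finset.mem_product]
          refine ⟨Finset.mem_univ _, (hmem_s _).mpr ⟨?_, ?_⟩⟩
          · exact hinj.mono (by simp [Finset.erase_subset])
          · ext ℓ
            simp only [Finset.mem_image, Finset.mem_erase]
            constructor
            · rintro ⟨r, ⟨hrq, hrX⟩, hrℓ⟩
              have hℓ : ℓ ∈ insert a I := himg ▸ hrℓ ▸ Finset.mem_image_of_mem _ hrX
              rcases Finset.mem_insert.mp hℓ with h | h
              · exfalso
                apply hrq
                exact hinj (Finset.mem_coe.mpr hrX) (Finset.mem_coe.mpr hqX)
                  (by rw [hrℓ, hqa, h])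
              · exact h
            · intro hℓ
              have hℓ' : ℓ ∈ X.image Prod.snd := himg ▸ Finset.mem_insert_of_mem hℓ
              obtain ⟨r, hrX, hrℓ⟩ := Finset.mem_image.mp hℓ'
              refine ⟨r, ⟨?_, hrX⟩, hrℓ⟩
              intro hrq
              apply ha
              rw [← hrℓ, hrq, hqa] at hℓ
              exact hℓ
        · simp only
          rw [← hq', Finset.insert_erase hqX]
      · -- values agree
        rintro ⟨x, X'⟩ hp
        rw [Finset.mem_product] at hp
        rw [Finset.prod_insert (hnotmem x X' hp.2)]

/-- A normalized GLMB density on finite labeled subsets of a finite space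
`𝕏 × 𝕃` has set integral equal to 1 (in the discrete setting the set integral
is the sum of `π` over all finite subsets of `𝕏 × 𝕃`). -/
theorem GLMB_set_integral_eq_one {𝕏 𝕃 Ξ : Type*} [Fintype 𝕏] [Fintype 𝕃] [Fintype Ξ]
    [DecidableEq 𝕏] [DecidableEq 𝕃]
    (ω : Ξ → Finset 𝕃 → ℝ)
    (hω : ∀ ξ I, 0 ≤ ω ξ I)
    (hωsum : ∑ ξ : Ξ, ∑ I : Finset 𝕃, ω ξ I = 1)
    (p : Ξ → 𝕏 → 𝕃 → ℝ)
    (hp_nonneg : ∀ ξ x ℓ, 0 ≤ p ξ x ℓ)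
    (hp_sum : ∀ ξ ℓ, ∑ x : 𝕏, p ξ x ℓ = 1)
    (π : Finset (𝕏 × 𝕃) → ℝ)
    (hπ : ∀ X, π X =
      (if Set.InjOn Prod.snd (X : Set (𝕏 × 𝕃)) then (1 : ℝ) else 0) *
        ∑ ξ : Ξ, ∑ I : Finset 𝕃,
          ω ξ I * (if X.image Prod.snd = I then (1 : ℝ) else 0) *
            ∏ q ∈ X, p ξ q.1 q.2) :
    ∑ X : Finset (𝕏 × 𝕃), π X = 1 := by
  classical
  have hstep : ∀ X : Finset (𝕏 × 𝕃), π X =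
      ∑ ξ : Ξ, ∑ I : Finset 𝕃, ω ξ I *
        (if Set.InjOn Prod.snd (X : Set (𝕏 × 𝕃)) ∧ X.image Prod.snd = I
          then ∏ q ∈ X, p ξ q.1 q.2 else 0) := by
    intro X
    rw [hπ X, Finset.mul_sum]
    refine Finset.sum_congr rfl fun ξ _ => ?_
    rw [Finset.mul_sum]
    refine Finset.sum_congr rfl fun I _ => ?_
    by_cases h1 : Set.InjOn Prod.snd (X : Set (𝕏 × 𝕃)) <;>
      by_cases h2 : X.image Prod.snd = I <;>
      simp [h1, h2]
  calc ∑ X : Finset (𝕏 × 𝕃), π X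
      = ∑ X : Finset (𝕏 × 𝕃), ∑ ξ : Ξ, ∑ I : Finset 𝕃, ω ξ I *
          (if Set.InjOn Prod.snd (X : Set (𝕏 × 𝕃)) ∧ X.image Prod.snd = I
            then ∏ q ∈ X, p ξ q.1 q.2 else 0) :=
        Finset.sum_congr rfl fun X _ => hstep X
    _ = ∑ ξ : Ξ, ∑ I : Finset 𝕃, ∑ X : Finset (𝕏 × 𝕃), ω ξ I *
          (if Set.InjOn Prod.snd (X : Set (𝕏 × 𝕃)) ∧ X.image Prod.snd = I
            then ∏ q ∈ X, p ξ q.1 q.2 else 0) := by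
        rw [Finset.sum_comm]
        exact Finset.sum_congr rfl fun ξ _ => Finset.sum_comm
    _ = ∑ ξ : Ξ, ∑ I : Finset 𝕃, ω ξ I := by
        refine Finset.sum_congr rfl fun ξ _ => Finset.sum_congr rfl fun I _ => ?_
        rw [← Finset.mul_sum, GLMB_key (fun q => p ξ q.1 q.2) I]
        simp [hp_sum ξ]
    _ = 1 := hωsum
end
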